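/- In Ш_ℤ(ℤ) of weight 0, if a prime Rota-Baxter ideal I contains p a_0 for a prime number p, then a_1 ∈ I; specifically, a_1^p = p! · a_p (iterated product of a_1 with itself p times), which lies in I since p! a_p = (p−1)! P^p(p a_0). -/

import Mathlib

open Finsupp

/-- The basis element `a_m` of the free Rota-Baxter algebra `Ш_k(k)`. -/
noncomputable def aElt {k : Type*} [CommRing k] (m : ℕ) : ℕ →₀ k := Finsupp.single m 1

/-- The product `⋄` of weight `l` on `Ш_k(k)`, defined on basis elements by
`a_m ⋄ a_n = Σ_{i=0}^{min(m,n)} C(m+n−i,m) C(m,i) l^i a_{m+n−i}` and extended bilinearly. -/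
noncomputable def diamond {k : Type*} [CommRing k] (l : k) (f g : ℕ →₀ k) : ℕ →₀ k :=
  f.sum fun m cm => g.sum fun n cn =>
    ∑ i ∈ Finset.range (min m n + 1),
      Finsupp.single (m + n - i) (cm * cn * ((m + n - i).choose m : k) * ((m.choose i : k)) * l ^ i)

/-- The Rota-Baxter operator `P (a_m) = a_{m+1}` on `Ш_k(k)`. -/
noncomputable def RBop {k : Type*} [CommRing k] (f : ℕ →₀ k) : ℕ →₀ k :=
  Finsupp.mapDomain (· + 1) f

/-- A Rota-Baxter ideal of `Ш_k(k)` of weight `l`: a `k`-submodule that is an ideal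
for `⋄` and closed under `P`. -/
def IsRBIdeal {k : Type*} [CommRing k] (l : k) (I : Submodule k (ℕ →₀ k)) : Prop :=
  (∀ f g : ℕ →₀ k, g ∈ I → diamond l f g ∈ I) ∧ (∀ f ∈ I, RBop f ∈ I)

/-- The Rota-Baxter ideal of `Ш_k(k)` generated by a set `S`. -/
noncomputable def RBspan {k : Type*} [CommRing k] (l : k) (S : Set (ℕ →₀ k)) :
    Submodule k (ℕ →₀ k) :=
  sInf {J : Submodule k (ℕ →₀ k) | IsRBIdeal l J ∧ S ⊆ J}

/-- The coefficient ideal `Ω_j(I)`: coefficients at `a_j` of elements of `I`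
supported in degrees `≤ j`. -/
def Omega {k : Type*} [CommRing k] (I : Set (ℕ →₀ k)) (j : ℕ) : Set k :=
  {b | ∃ f ∈ I, (∀ i, j < i → f i = 0) ∧ f j = b}

/-- The set of initial terms of nonzero elements of `I`. -/
def initialSet {k : Type*} [CommRing k] (I : Set (ℕ →₀ k)) : Set (ℕ →₀ k) :=
  {g | ∃ f ∈ I, ∃ n : ℕ, (∀ i, n < i → f i = 0) ∧ f n ≠ 0 ∧ g = Finsupp.single n (f n)}


/-- Iterated `⋄`-power of weight `0`: `dpow f 0 = a_0`, `dpow f (n+1) = f ⋄ dpow f n`. -/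
noncomputable def dpow {k : Type*} [CommRing k] (f : ℕ →₀ k) : ℕ → (ℕ →₀ k)
  | 0 => aElt 0
  | n + 1 => diamond (0 : k) f (dpow f n)

lemma diamond_single_single {k : Type*} [CommRing k] (l : k) (m n : ℕ) (cm cn : k) :
    diamond l (Finsupp.single m cm) (Finsupp.single n cn) =
      ∑ i ∈ Finset.range (min m n + 1),
        Finsupp.single (m + n - i)
          (cm * cn * ((m + n - i).choose m : k) * ((m.choose i : k)) * l ^ i) := by
  unfold diamond
  rw [Finsupp.sum_single_index, Finsupp.sum_single_index]
  · simp
  · simp [Finsupp.sum_single_index]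

lemma diamond0_single {k : Type*} [CommRing k] (m n : ℕ) (cm cn : k) :
    diamond (0 : k) (Finsupp.single m cm) (Finsupp.single n cn) =
      Finsupp.single (m + n) (cm * cn * ((m + n).choose m : k)) := by
  rw [diamond_single_single, Finset.sum_eq_single 0]
  · simp
  · intro i _ hi
    simp [zero_pow hi]
  · simp

lemma diamond_a0 {k : Type*} [CommRing k] (l : k) (f : ℕ →₀ k) :
    diamond l f (aElt 0) = f := by
  unfold diamond aElt
  have : ∀ (m : ℕ) (cm : k),
      ((Finsupp.single 0 (1 : k)).sum fun n cn =>
        ∑ i ∈ Finset.range (min m n + 1),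
          Finsupp.single (m + n - i)
            (cm * cn * ((m + n - i).choose m : k) * ((m.choose i : k)) * l ^ i))
        = Finsupp.single m cm := by
    intro m cm
    rw [Finsupp.sum_single_index]
    · rw [Nat.min_zero, Finset.sum_range_one]
      norm_num
    · simp
  simp only [this]
  exact Finsupp.sum_single f

lemma dpow_a1 (n : ℕ) :
    dpow (aElt 1 : ℕ →₀ ℤ) n = (n.factorial : ℤ) • (aElt n : ℕ →₀ ℤ) := by
  induction n with
  | zero => simp [dpow, aElt]
  | succ n ih =>
    have hsm : (n.factorial : ℤ) • (aElt n : ℕ →₀ ℤ) = Finsupp.single n (n.factorial : ℤ) := by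
      simp [aElt, Finsupp.smul_single]
    rw [dpow, ih, hsm]
    show diamond (0 : ℤ) (Finsupp.single 1 (1:ℤ)) _ = _
    rw [diamond0_single]
    have : (1 + n).choose 1 = n + 1 := by
      rw [Nat.add_comm]; simp
    rw [this, Nat.add_comm 1 n]
    simp only [aElt, Finsupp.smul_single, smul_eq_mul, mul_one]
    congr 1
    rw [Nat.factorial_succ]
    push_cast
    ring

lemma RBop_iter_single (c : ℤ) (m j : ℕ) :
    RBop^[j] (Finsupp.single m c) = Finsupp.single (m + j) c := by
  induction j with
  | zero => simp
  | succ j ih =>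
    rw [Function.iterate_succ_apply', ih]
    simp [RBop, Finsupp.mapDomain_single, Nat.add_assoc]

/-- In `Ш_ℤ(ℤ)` of weight `0`, if a prime Rota-Baxter ideal `I` contains `p a_0` for a prime
`p`, then `a_1 ∈ I`; specifically `a_1^p = p! a_p`, which lies in `I` since
`p! a_p = (p−1)! P^p(p a_0)`. -/
theorem a_one_mem_of_prime (I : Submodule ℤ (ℕ →₀ ℤ)) (hI : IsRBIdeal (0 : ℤ) I)
    (htop : I ≠ ⊤)
    (hprime : ∀ f g : ℕ →₀ ℤ, diamond (0 : ℤ) f g ∈ I → f ∈ I ∨ g ∈ I)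
    (p : ℕ) (hp : p.Prime) (hpa : (p : ℤ) • (aElt 0 : ℕ →₀ ℤ) ∈ I) :
    dpow (aElt 1 : ℕ →₀ ℤ) p = (p.factorial : ℤ) • (aElt p : ℕ →₀ ℤ)
    ∧ (p.factorial : ℤ) • (aElt p : ℕ →₀ ℤ)
        = ((p - 1).factorial : ℤ) • (RBop^[p] ((p : ℤ) • (aElt 0 : ℕ →₀ ℤ)))
    ∧ dpow (aElt 1 : ℕ →₀ ℤ) p ∈ I
    ∧ (aElt 1 : ℕ →₀ ℤ) ∈ I := by
  have hp1 : 0 < p := hp.pos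
  have e1 : dpow (aElt 1 : ℕ →₀ ℤ) p = (p.factorial : ℤ) • aElt p := dpow_a1 p
  have hsingle : (p : ℤ) • (aElt 0 : ℕ →₀ ℤ) = Finsupp.single 0 (p : ℤ) := by
    simp [aElt, Finsupp.smul_single]
  have e2 : (p.factorial : ℤ) • (aElt p : ℕ →₀ ℤ)
      = ((p - 1).factorial : ℤ) • (RBop^[p] ((p : ℤ) • (aElt 0 : ℕ →₀ ℤ))) := by
    rw [hsingle, RBop_iter_single]
    simp only [Nat.zero_add, aElt, Finsupp.smul_single, smul_eq_mul, mul_one]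
    congr 1
    rw [← Nat.mul_factorial_pred hp1.ne']
    push_cast
    ring
  have hmem : ∀ (j : ℕ) (f : ℕ →₀ ℤ), f ∈ I → RBop^[j] f ∈ I := by
    intro j
    induction j with
    | zero => intro f hf; simpa using hf
    | succ j ih =>
      intro f hf
      rw [Function.iterate_succ_apply']
      exact hI.2 _ (ih f hf)
  have h3 : dpow (aElt 1 : ℕ →₀ ℤ) p ∈ I := by
    rw [e1, e2]
    exact Submodule.smul_mem _ _ (hmem p _ hpa)
  have h0 : (aElt 0 : ℕ →₀ ℤ) ∉ I := by
    intro h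
    apply htop
    rw [eq_top_iff]
    intro f _
    have := hI.1 f _ h
    rwa [diamond_a0] at this
  have key : ∀ n, dpow (aElt 1 : ℕ →₀ ℤ) n ∈ I → (aElt 1 : ℕ →₀ ℤ) ∈ I := by
    intro n
    induction n with
    | zero => intro h; exact absurd h h0
    | succ n ih =>
      intro h
      rcases hprime _ _ h with h1 | h1
      · exact h1
      · exact ih h1
  exact ⟨e1, e2, h3, key p h3⟩
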